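/- arXiv:1207.4330 — 4 statements merged into one kernel-verified Lean document; each statement's English description precedes it below -/
import Mathlib

section
/- Let f be holomorphic near a fixed point p with f(p) = p and |f'(p)| > 1. Then there exists r > 0 and a univalent holomorphic map Ψ on the disc of radius r centered at 0 with Ψ(0) = p, Ψ'(0) = 1, and Ψ(λz) = f(Ψ(z)) whenever |z| < r/|λ|, where λ = f'(p). (Koenigs linearization at a repelling fixed point.) -/
open Metric

open Filter Asymptotics Set in
open scoped Topology in
set_option maxHeartbeats 1000000 in
/-- Koenigs linearization at a repelling fixed point. -/
theorem koenigs_linearization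
    (f : ℂ → ℂ) (p : ℂ) (U : Set ℂ) (hU : U ∈ nhds p)
    (hf : DifferentiableOn ℂ f U) (hfp : f p = p)
    (hlam : 1 < ‖deriv f p‖) :
    ∃ r > (0 : ℝ), ∃ Ψ : ℂ → ℂ,
      DifferentiableOn ℂ Ψ (ball (0 : ℂ) r) ∧
      Set.InjOn Ψ (ball (0 : ℂ) r) ∧
      Ψ 0 = p ∧ deriv Ψ 0 = 1 ∧
      ∀ z : ℂ, ‖z‖ < r / ‖deriv f p‖ →
        Ψ (deriv f p * z) = f (Ψ z) := by
  classical
  have hfa : AnalyticAt ℂ f p := hf.analyticAt hU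
  set lam : ℂ := deriv f p with hlamdef
  have ha1 : 1 < ‖lam‖ := by exact hlam
  have ha0 : (0:ℝ) < ‖lam‖ := lt_trans one_pos ha1
  have hlam0 : lam ≠ 0 := by
    intro h; rw [h] at ha1; norm_num at ha1
  -- the contraction constant c
  obtain ⟨c, hc1, hc2, hc3, hc4⟩ :
      ∃ c : ℝ, ‖lam‖⁻¹ < c ∧ c < 1 ∧ ‖lam‖ * c^2 < 1 ∧ 0 < c := by
    have h0 : (0:ℝ) < ‖lam‖⁻¹ := inv_pos.2 ha0
    have h1 : ‖lam‖⁻¹ < 1 := inv_lt_one_of_one_lt₀ ha1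
    set s : ℝ := Real.sqrt ‖lam‖⁻¹ with hsdef
    have hs0 : 0 < s := Real.sqrt_pos.2 h0
    have hssq : s^2 = ‖lam‖⁻¹ := Real.sq_sqrt h0.le
    have hs1 : s < 1 := by nlinarith
    have hsa : ‖lam‖⁻¹ < s := by nlinarith
    refine ⟨Real.sqrt (‖lam‖⁻¹ * s), ?_, ?_, ?_, ?_⟩
    · have hcsq : (Real.sqrt (‖lam‖⁻¹ * s))^2 = ‖lam‖⁻¹ * s :=
        Real.sq_sqrt (by positivity)
      have hcpos : 0 < Real.sqrt (‖lam‖⁻¹ * s) := Real.sqrt_pos.2 (by positivity)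
      nlinarith
    · have hcsq : (Real.sqrt (‖lam‖⁻¹ * s))^2 = ‖lam‖⁻¹ * s :=
        Real.sq_sqrt (by positivity)
      have hcpos : 0 < Real.sqrt (‖lam‖⁻¹ * s) := Real.sqrt_pos.2 (by positivity)
      nlinarith
    · have hcsq : (Real.sqrt (‖lam‖⁻¹ * s))^2 = ‖lam‖⁻¹ * s :=
        Real.sq_sqrt (by positivity)
      have : ‖lam‖ * (‖lam‖⁻¹ * s) = s := by field_simp
      nlinarith
    · exact Real.sqrt_pos.2 (by positivity)
  -- quadratic Taylor estimate for f at p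
  obtain ⟨ps, hps⟩ := id hfa
  have hps2 : ∀ y : ℂ, ps.partialSum 2 y = p + lam * y := by
    intro y
    have h0 : ps.coeff 0 = p := by
      have h := hps.coeff_zero 1
      rw [hfp] at h
      exact h
    have h1 : ps.coeff 1 = lam := hps.deriv.symm
    simp [FormalMultilinearSeries.partialSum, Finset.sum_range_succ,
      FormalMultilinearSeries.apply_eq_pow_smul_coeff, h0, h1, smul_eq_mul]
    ring
  have hO : (fun y : ℂ => f (p + y) - p - lam * y) =O[𝓝 0] (fun y => ‖y‖ ^ 2) := by
    have h := hps.isBigO_sub_partialSum_pow 2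
    refine h.congr' ?_ EventuallyEq.rfl
    filter_upwards with y
    rw [hps2]; ring
  obtain ⟨C0, hC0⟩ := Asymptotics.isBigO_iff.1 hO
  set C : ℝ := max C0 1 with hCdef
  have hCpos : 0 < C := lt_of_lt_of_le one_pos (le_max_right _ _)
  have hA2 : ∀ᶠ u in 𝓝 p, ‖f u - p - lam * (u - p)‖ ≤ C * ‖u - p‖^2 := by
    have ht : Tendsto (fun u : ℂ => u - p) (𝓝 p) (𝓝 (p - p)) :=
      ((continuous_id.sub continuous_const).tendsto p)
    rw [sub_self] at ht
    filter_upwards [ht.eventually hC0] with u hu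
    have h1 : ‖f u - p - lam * (u - p)‖ ≤ C0 * ‖u - p‖ ^ 2 := by
      have h2 : p + (u - p) = u := by ring
      rw [h2] at hu
      simpa [Real.norm_of_nonneg (sq_nonneg _)] using hu
    calc ‖f u - p - lam * (u - p)‖ ≤ C0 * ‖u - p‖ ^ 2 := h1
      _ ≤ C * ‖u - p‖^2 := by
          have := le_max_left C0 1
          nlinarith [sq_nonneg ‖u - p‖]
  -- local inverse g of f near p
  have hsf : HasStrictDerivAt f lam p := hfa.contDiffAt.hasStrictDerivAt (n := 1) one_ne_zero
  set G : OpenPartialHomeomorph ℂ ℂ := (hsf.hasStrictFDerivAt_equiv hlam0).toOpenPartialHomeomorph f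
    with hGdef
  have hGcoe : ⇑G = f := rfl
  set g : ℂ → ℂ := ⇑G.symm with hgdef
  have hpsrc : p ∈ G.source := (hsf.hasStrictFDerivAt_equiv hlam0).mem_toOpenPartialHomeomorph_source
  have hptgt : p ∈ G.target := by
    have h := G.map_source hpsrc
    rwa [hGcoe, hfp] at h
  have hgp : g p = p := by
    have h := G.left_inv hpsrc
    rwa [hGcoe, hfp] at h
  have hfg' : ∀ y ∈ G.target, f (g y) = y := by
    intro y hy
    have h := G.right_inv hy
    rwa [hGcoe] at h
  have hgf' : ∀ x ∈ G.source, g (f x) = x := by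
    intro x hx
    have h := G.left_inv hx
    rwa [hGcoe] at h
  have hg_strict : HasStrictDerivAt g lam⁻¹ p := by
    refine G.hasStrictDerivAt_symm hptgt hlam0 ?_
    rw [hGcoe, show ⇑G.symm p = p from hgp]
    exact hsf
  have hg_cont : ContinuousAt g p := G.continuousAt_symm hptgt
  -- differentiability of g near p
  obtain ⟨V₀, hV₀U, hV₀open, hpV₀⟩ := _root_.mem_nhds_iff.1 hU
  have hfan : AnalyticOnNhd ℂ f V₀ := (hf.mono hV₀U).analyticOnNhd hV₀open
  have hder_cont : ContinuousAt (deriv f) p := (hfan.deriv p hpV₀).continuousAt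
  have hQ : ∀ᶠ u in 𝓝 p, DifferentiableAt ℂ f u ∧ deriv f u ≠ 0 := by
    have h1 : ∀ᶠ u in 𝓝 p, DifferentiableAt ℂ f u := by
      filter_upwards [hV₀open.mem_nhds hpV₀] with u hu
      exact (hfan u hu).differentiableAt
    have h2 : ∀ᶠ u in 𝓝 p, deriv f u ≠ 0 := hder_cont.eventually_ne hlam0
    exact h1.and h2
  have hg_tendsto : Tendsto g (𝓝 p) (𝓝 p) := by
    have h := hg_cont.tendsto
    rwa [hgp] at h
  have hgdiff : ∀ᶠ w in 𝓝 p, DifferentiableAt ℂ g w := by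
    filter_upwards [hg_tendsto.eventually hQ, G.open_target.mem_nhds hptgt] with w hw hwt
    have hcw : ContinuousAt g w := G.continuousAt_symm hwt
    have hli : ∀ᶠ y in 𝓝 w, f (g y) = y := by
      filter_upwards [G.open_target.mem_nhds hwt] with y hy
      exact hfg' y hy
    exact (HasDerivAt.of_local_left_inverse hcw hw.1.hasDerivAt hw.2 hli).differentiableAt
  -- contraction estimate for g near p
  have hA1 : ∀ᶠ w in 𝓝 p, ‖g w - p‖ ≤ c * ‖w - p‖ := by
    have hεpos : (0:ℝ) < c - ‖lam‖⁻¹ := sub_pos.2 hc1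
    have hlo := (hasDerivAt_iff_isLittleO.1 hg_strict.hasDerivAt).def hεpos
    filter_upwards [hlo] with w hw
    rw [hgp] at hw
    have h1 : ‖g w - p‖ ≤ ‖(w - p) • lam⁻¹‖ + (c - ‖lam‖⁻¹) * ‖w - p‖ := by
      have h3 := norm_add_le ((g w - p) - (w - p) • lam⁻¹) ((w - p) • lam⁻¹)
      rw [sub_add_cancel] at h3
      calc ‖g w - p‖ ≤ ‖(g w - p) - (w - p) • lam⁻¹‖ + ‖(w - p) • lam⁻¹‖ := h3
        _ ≤ (c - ‖lam‖⁻¹) * ‖w - p‖ + ‖(w - p) • lam⁻¹‖ := add_le_add_left hw _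
        _ = ‖(w - p) • lam⁻¹‖ + (c - ‖lam‖⁻¹) * ‖w - p‖ := by ring
    have h2 : ‖(w - p) • lam⁻¹‖ = ‖lam‖⁻¹ * ‖w - p‖ := by
      rw [smul_eq_mul, norm_mul, norm_inv, mul_comm]
    rw [h2] at h1
    calc ‖g w - p‖ ≤ ‖lam‖⁻¹ * ‖w - p‖ + (c - ‖lam‖⁻¹) * ‖w - p‖ := h1
      _ = c * ‖w - p‖ := by ring
  -- choose the radius δ
  have hbig : ∀ᶠ w in 𝓝 p, (‖g w - p‖ ≤ c * ‖w - p‖) ∧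
      (‖f w - p - lam * (w - p)‖ ≤ C * ‖w - p‖^2) ∧ DifferentiableAt ℂ g w ∧ w ∈ G.target := by
    filter_upwards [hA1, hA2, hgdiff, G.open_target.mem_nhds hptgt] with w h1 h2 h3 h4
    exact ⟨h1, h2, h3, h4⟩
  obtain ⟨δ, hδpos, hδ⟩ := Metric.eventually_nhds_iff_ball.1 hbig
  have hballnorm : ∀ w : ℂ, w ∈ ball p δ ↔ ‖w - p‖ < δ := by
    intro w; rw [mem_ball, dist_eq_norm]
  -- the orbit of g stays in the ball and contracts
  have horbit : ∀ w ∈ ball p δ, ∀ n : ℕ,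
      g^[n] w ∈ ball p δ ∧ ‖g^[n] w - p‖ ≤ c ^ n * ‖w - p‖ := by
    intro w hw n
    induction n with
    | zero => simpa using hw
    | succ n ih =>
      obtain ⟨hin, hle⟩ := ih
      have h1 := (hδ _ hin).1
      have hcn : c ^ (n+1) * ‖w - p‖ ≤ ‖w - p‖ := by
        have : c ^ (n+1) ≤ 1 := pow_le_one₀ hc4.le hc2.le
        nlinarith [norm_nonneg (w - p)]
      have h2 : ‖g^[n+1] w - p‖ ≤ c ^ (n+1) * ‖w - p‖ := by
        rw [Function.iterate_succ_apply']
        calc ‖g (g^[n] w) - p‖ ≤ c * ‖g^[n] w - p‖ := h1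
          _ ≤ c * (c ^ n * ‖w - p‖) := by nlinarith
          _ = c ^ (n+1) * ‖w - p‖ := by ring
      refine ⟨?_, h2⟩
      rw [hballnorm] at hw ⊢
      exact lt_of_le_of_lt (h2.trans hcn) hw
  have hgball : ∀ w ∈ ball p δ, g w ∈ ball p δ := by
    intro w hw
    have h := (horbit w hw 1).1
    simpa using h
  -- quadratic estimate for g
  set C' : ℝ := C * c^2 * ‖lam‖⁻¹ with hC'def
  have hC'pos : 0 < C' := by positivity
  have hgq : ∀ w ∈ ball p δ, ‖g w - p - lam⁻¹ * (w - p)‖ ≤ C' * ‖w - p‖^2 := by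
    intro w hw
    have h1 := (hδ w hw).1
    have hgw : g w ∈ ball p δ := hgball w hw
    have h2 := (hδ _ hgw).2.1
    have h3 : f (g w) = w := hfg' w (hδ w hw).2.2.2
    rw [h3] at h2
    have key : g w - p - lam⁻¹ * (w - p) = -lam⁻¹ * (w - p - lam * (g w - p)) := by
      field_simp
      ring
    rw [key, norm_mul, norm_neg, norm_inv]
    have h4 : ‖g w - p‖^2 ≤ (c * ‖w - p‖)^2 := by
      have := norm_nonneg (g w - p)
      nlinarith
    have h5 : ‖w - p - lam * (g w - p)‖ ≤ C * (c * ‖w - p‖)^2 := by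
      calc ‖w - p - lam * (g w - p)‖ ≤ C * ‖g w - p‖^2 := h2
        _ ≤ C * (c * ‖w - p‖)^2 := by nlinarith
    calc ‖lam‖⁻¹ * ‖w - p - lam * (g w - p)‖
        ≤ ‖lam‖⁻¹ * (C * (c * ‖w - p‖)^2) := by
          have : (0:ℝ) ≤ ‖lam‖⁻¹ := by positivity
          nlinarith
      _ = C' * ‖w - p‖^2 := by rw [hC'def]; ring
  -- the Koenigs sequence
  set φ : ℕ → ℂ → ℂ := fun n w => lam ^ n * (g^[n] w - p) with hφdef
  set d : ℕ → ℂ → ℂ := fun n w => φ (n+1) w - φ n w with hddef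
  set q : ℝ := ‖lam‖ * c^2 with hqdef
  have hq0 : 0 ≤ q := by positivity
  have hq1 : q < 1 := hc3
  set M : ℝ := ‖lam‖ * C' * δ^2 with hMdef
  have hdb : ∀ (n : ℕ), ∀ w ∈ ball p δ, ‖d n w‖ ≤ M * q ^ n := by
    intro n w hw
    have hkey : d n w = lam ^ (n+1) * (g (g^[n] w) - p - lam⁻¹ * (g^[n] w - p)) := by
      simp only [hddef, hφdef, Function.iterate_succ_apply']
      field_simp
      ring
    obtain ⟨hin, hle⟩ := horbit w hw n
    have h1 := hgq _ hin
    have h2 : ‖g^[n] w - p‖ ≤ c ^ n * δ := by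
      have hwδ : ‖w - p‖ ≤ δ := ((hballnorm w).1 hw).le
      have hcn : (0:ℝ) ≤ c ^ n := by positivity
      exact hle.trans (mul_le_mul_of_nonneg_left hwδ hcn)
    have h3 : ‖g^[n] w - p‖^2 ≤ (c ^ n * δ)^2 :=
      pow_le_pow_left₀ (norm_nonneg _) h2 2
    rw [hkey, norm_mul, norm_pow]
    have hpn : (0:ℝ) ≤ ‖lam‖ ^ (n+1) := by positivity
    calc ‖lam‖ ^ (n+1) * ‖g (g^[n] w) - p - lam⁻¹ * (g^[n] w - p)‖
        ≤ ‖lam‖ ^ (n+1) * (C' * (c ^ n * δ)^2) :=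
          mul_le_mul_of_nonneg_left
            (h1.trans (mul_le_mul_of_nonneg_left h3 hC'pos.le)) hpn
      _ = M * q ^ n := by rw [hMdef, hqdef]; ring
  have hsum : Summable (fun n : ℕ => M * q ^ n) :=
    (summable_geometric_of_lt_one hq0 hq1).mul_left M
  set T : ℂ → ℂ := fun w => ∑' n, d n w with hTdef
  have hTU : TendstoUniformlyOn (fun N w => ∑ n ∈ Finset.range N, d n w) T atTop (ball p δ) :=
    tendstoUniformlyOn_tsum_nat hsum (fun n w hw => hdb n w hw)
  set Φ : ℂ → ℂ := fun w => (w - p) + T w with hΦdef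
  have hφsum : ∀ (N : ℕ) (w : ℂ), φ N w = (w - p) + ∑ n ∈ Finset.range N, d n w := by
    intro N w
    have h1 : ∑ n ∈ Finset.range N, d n w = φ N w - φ 0 w := by
      simp only [hddef]
      exact Finset.sum_range_sub (fun n => φ n w) N
    have h2 : φ 0 w = w - p := by simp [hφdef]
    rw [h1, h2]; ring
  have htuφ : TendstoUniformlyOn φ Φ atTop (ball p δ) := by
    rw [Metric.tendstoUniformlyOn_iff] at hTU ⊢
    intro ε hε
    filter_upwards [hTU ε hε] with N hN w hw
    have h := hN w hw
    rw [hφsum, hΦdef]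
    simpa [dist_add_left] using h
  -- the limit map Φ is holomorphic with Φ p = 0, Φ' p = 1
  have hφdiffOn : ∀ N : ℕ, DifferentiableOn ℂ (φ N) (ball p δ) := by
    have hiter : ∀ N : ℕ, ∀ w ∈ ball p δ, DifferentiableAt ℂ (g^[N]) w := by
      intro N
      induction N with
      | zero => intro w _; simpa using differentiableAt_id'
      | succ n ih =>
        intro w hw
        rw [Function.iterate_succ']
        exact DifferentiableAt.comp w ((hδ _ (horbit w hw n).1).2.2.1) (ih w hw)
    intro N w hw
    exact ((((hiter N w hw).sub_const p).const_mul (lam ^ N))).differentiableWithinAt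
  have hltu := htuφ.tendstoLocallyUniformlyOn
  have hΦdiff : DifferentiableOn ℂ Φ (ball p δ) :=
    hltu.differentiableOn (Filter.Eventually.of_forall hφdiffOn) isOpen_ball
  have hφfix : ∀ N : ℕ, φ N p = 0 := by
    intro N
    simp [hφdef, Function.iterate_fixed hgp]
  have hΦp : Φ p = 0 := by
    have hd0 : ∀ n : ℕ, d n p = 0 := by
      intro n; simp only [hddef, hφfix, sub_zero]
    have hT0 : T p = 0 := by
      rw [hTdef]
      simp only [hd0, tsum_zero]
    rw [hΦdef]
    simp [hT0]
  have hgder : HasDerivAt g lam⁻¹ p := hg_strict.hasDerivAt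
  have hφNder : ∀ N : ℕ, HasDerivAt (φ N) 1 p := by
    intro N
    have h1 : HasDerivAt (g^[N]) (lam⁻¹ ^ N) p := hgder.iterate p hgp N
    have h2 := (h1.sub_const p).const_mul (lam ^ N)
    have h3 : lam ^ N * lam⁻¹ ^ N = 1 := by
      rw [← mul_pow, mul_inv_cancel₀ hlam0, one_pow]
    rw [h3] at h2
    exact h2
  have hΦderp : deriv Φ p = 1 := by
    have hder := hltu.deriv (Filter.Eventually.of_forall hφdiffOn) isOpen_ball
    have ht : Tendsto (fun N : ℕ => deriv (φ N) p) atTop (𝓝 (deriv Φ p)) :=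
      hder.tendsto_at (mem_ball_self hδpos)
    have heq : (fun N : ℕ => deriv (φ N) p) = fun _ => (1:ℂ) :=
      funext fun N => (hφNder N).deriv
    rw [heq] at ht
    exact (tendsto_nhds_unique ht tendsto_const_nhds)
  -- the functional equation for Φ
  have hfunc : ∀ w ∈ ball p δ, Φ (g w) = lam⁻¹ * Φ w := by
    intro w hw
    have hgw : g w ∈ ball p δ := hgball w hw
    have t1 : Tendsto (fun N : ℕ => φ N (g w)) atTop (𝓝 (Φ (g w))) := htuφ.tendsto_at hgw
    have t2 : Tendsto (fun N : ℕ => lam⁻¹ * φ (N+1) w) atTop (𝓝 (lam⁻¹ * Φ w)) := by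
      have h := ((htuφ.tendsto_at hw).comp (tendsto_add_atTop_nat 1)).const_mul lam⁻¹
      exact h
    have he : (fun N : ℕ => φ N (g w)) = fun N : ℕ => lam⁻¹ * φ (N+1) w := by
      funext N
      simp only [hφdef, ← Function.iterate_succ_apply]
      field_simp
      ring
    rw [he] at t1
    exact tendsto_nhds_unique t1 t2
  -- invert Φ near p
  have hΦa : AnalyticAt ℂ Φ p := hΦdiff.analyticAt (isOpen_ball.mem_nhds (mem_ball_self hδpos))
  have hΦs1 : HasStrictDerivAt Φ (deriv Φ p) p := hΦa.contDiffAt.hasStrictDerivAt (n := 1) one_ne_zero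
  rw [hΦderp] at hΦs1
  have h10 : (1 : ℂ) ≠ 0 := one_ne_zero
  set E : OpenPartialHomeomorph ℂ ℂ := (hΦs1.hasStrictFDerivAt_equiv h10).toOpenPartialHomeomorph Φ
    with hEdef
  have hEcoe : ⇑E = Φ := rfl
  set Ψ : ℂ → ℂ := ⇑E.symm with hΨdef
  have hpEsrc : p ∈ E.source := (hΦs1.hasStrictFDerivAt_equiv h10).mem_toOpenPartialHomeomorph_source
  have h0tgt : (0:ℂ) ∈ E.target := by
    have h := E.map_source hpEsrc
    rwa [hEcoe, hΦp] at h
  have hΨ0 : Ψ 0 = p := by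
    have h := E.left_inv hpEsrc
    rwa [hEcoe, hΦp] at h
  have hΨright : ∀ y ∈ E.target, Φ (Ψ y) = y := by
    intro y hy
    have h := E.right_inv hy
    rwa [hEcoe] at h
  have hΦan : AnalyticOnNhd ℂ Φ (ball p δ) := hΦdiff.analyticOnNhd isOpen_ball
  have hdΦcont : ContinuousAt (deriv Φ) p := (hΦan.deriv p (mem_ball_self hδpos)).continuousAt
  have hdΦne : ∀ᶠ w in 𝓝 p, deriv Φ w ≠ 0 := by
    refine hdΦcont.eventually_ne ?_
    rw [hΦderp]; exact one_ne_zero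
  have hfct : Tendsto f (𝓝 p) (𝓝 p) := by
    have h := hfa.continuousAt.tendsto
    rwa [hfp] at h
  have hV : ∀ᶠ w in 𝓝 p, w ∈ ball p δ ∧ deriv Φ w ≠ 0 ∧ f w ∈ ball p δ ∧
      g (f w) = w ∧ f w ∈ E.source := by
    filter_upwards [isOpen_ball.mem_nhds (mem_ball_self hδpos), hdΦne,
      hfct.eventually (isOpen_ball.mem_nhds (mem_ball_self hδpos)),
      G.open_source.mem_nhds hpsrc,
      hfct.eventually (E.open_source.mem_nhds hpEsrc)] with w h1 h2 h3 h4 h5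
    exact ⟨h1, h2, h3, hgf' w h4, h5⟩
  have hΨt : Tendsto Ψ (𝓝 0) (𝓝 p) := by
    have h := (E.continuousAt_symm h0tgt).tendsto
    rw [← hΨdef] at h
    rwa [hΨ0] at h
  have hfin : ∀ᶠ z in 𝓝 (0:ℂ), z ∈ E.target ∧ (Ψ z ∈ ball p δ ∧ deriv Φ (Ψ z) ≠ 0 ∧
      f (Ψ z) ∈ ball p δ ∧ g (f (Ψ z)) = Ψ z ∧ f (Ψ z) ∈ E.source) :=
    by
      have hmem : ∀ᶠ z in 𝓝 (0:ℂ), z ∈ E.target := by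
        filter_upwards [E.open_target.mem_nhds h0tgt] with z hz using hz
      exact hmem.and (hΨt.eventually hV)
  obtain ⟨r, hrpos, hr⟩ := Metric.eventually_nhds_iff_ball.1 hfin
  have hΨder : ∀ z ∈ ball (0:ℂ) r, HasDerivAt Ψ (deriv Φ (Ψ z))⁻¹ z := by
    intro z hz
    obtain ⟨hzt, hball, hne, -, -, -⟩ := hr z hz
    have hcont : ContinuousAt Ψ z := E.continuousAt_symm hzt
    have hΦat : HasDerivAt Φ (deriv Φ (Ψ z)) (Ψ z) :=
      (hΦdiff.differentiableAt (isOpen_ball.mem_nhds hball)).hasDerivAt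
    have hli : ∀ᶠ y in 𝓝 z, Φ (Ψ y) = y := by
      filter_upwards [E.open_target.mem_nhds hzt] with y hy
      exact hΨright y hy
    exact HasDerivAt.of_local_left_inverse hcont hΦat hne hli
  refine ⟨r, hrpos, Ψ, ?_, ?_, hΨ0, ?_, ?_⟩
  · exact fun z hz => (hΨder z hz).differentiableAt.differentiableWithinAt
  · have hinj : Set.InjOn Ψ E.target := by
      have h := E.symm.injOn
      rwa [OpenPartialHomeomorph.symm_source] at h
    exact hinj.mono (fun z hz => (hr z hz).1)
  · have h0r : (0:ℂ) ∈ ball (0:ℂ) r := mem_ball_self hrpos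
    have h := (hΨder 0 h0r).deriv
    rw [hΨ0, hΦderp] at h
    simpa using h
  · intro z hz
    have hza : ‖z‖ < r / ‖lam‖ := by exact hz
    have hzr : z ∈ ball (0:ℂ) r := by
      rw [mem_ball_zero_iff]
      exact lt_of_lt_of_le hza (div_le_self hrpos.le ha1.le)
    obtain ⟨hzt, hΨball, -, hfball, hgfΨ, hfsrc⟩ := hr z hzr
    have h := hfunc (f (Ψ z)) hfball
    rw [hgfΨ, hΨright z hzt] at h
    have hΦfz : Φ (f (Ψ z)) = lam * z := by
      have h2 : lam * z = lam * (lam⁻¹ * Φ (f (Ψ z))) := by rw [← h]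
      rw [← mul_assoc, mul_inv_cancel₀ hlam0, one_mul] at h2
      exact h2.symm
    have hfin2 : Ψ (Φ (f (Ψ z))) = f (Ψ z) := by
      have h2 := E.left_inv hfsrc
      rwa [hEcoe] at h2
    rw [hΦfz] at hfin2
    exact hfin2
end

section
/- Let Ψ: ℂ → ℂ be entire and satisfy Ψ(λz) = f(Ψ(z)) for all z ∈ ℂ, where f is entire, λ = f'(p), Ψ(0) = p, and Ψ is injective on a neighbourhood of 0. If the fixed point p is not in the forward orbit of any critical value of f (i.e., for every n ≥ 1 and every w with f^n(w) = p, the derivative (f^n)'(w) ≠ 0), then Ψ'(z) ≠ 0 for every z with Ψ(z) = p. -/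
open Filter Set Topology

/-- If the fixed point `p` has only regular preimages under all iterates of `f`,
then the global linearization `Ψ` has nonvanishing derivative on the fiber of `p`. -/
theorem linearization_regular_fiber
    (f Ψ : ℂ → ℂ) (p lam : ℂ)
    (hf : Differentiable ℂ f) (hΨ : Differentiable ℂ Ψ)
    (hfp : f p = p) (hlam : lam = deriv f p) (hrep : 1 < ‖lam‖)
    (hΨ0 : Ψ 0 = p)
    (hinj : ∃ U ∈ nhds (0 : ℂ), Set.InjOn Ψ U)
    (hfun : ∀ z : ℂ, Ψ (lam * z) = f (Ψ z))
    (hreg : ∀ n : ℕ, 1 ≤ n → ∀ w : ℂ, f^[n] w = p → deriv f^[n] w ≠ 0) :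
    ∀ z : ℂ, Ψ z = p → deriv Ψ z ≠ 0 := by
  have hlam0 : lam ≠ 0 := by
    intro h
    rw [h, norm_zero] at hrep
    linarith
  -- iterated functional equation
  have key : ∀ (n : ℕ) (z : ℂ), Ψ (lam ^ n * z) = f^[n] (Ψ z) := by
    intro n
    induction n with
    | zero => simp
    | succ n ih =>
      intro z
      rw [Function.iterate_succ_apply', ← ih z, ← hfun, pow_succ, mul_comm (lam ^ n) lam,
        mul_assoc]
  -- iterated chain-rule identity
  have hchain : ∀ (n : ℕ) (z : ℂ),
      lam ^ n * deriv Ψ (lam ^ n * z) = deriv f^[n] (Ψ z) * deriv Ψ z := by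
    intro n z
    have h1 : HasDerivAt (fun w => Ψ (lam ^ n * w)) (deriv Ψ (lam ^ n * z) * lam ^ n) z := by
      have := ((hΨ (lam ^ n * z)).hasDerivAt).comp z
        (((hasDerivAt_id z).const_mul (lam ^ n)))
      exact this.congr_deriv (by simp)
    have h2 : HasDerivAt (fun w => f^[n] (Ψ w)) (deriv f^[n] (Ψ z) * deriv Ψ z) z :=
      ((hf.iterate n) (Ψ z)).hasDerivAt.comp z (hΨ z).hasDerivAt
    have heq : (fun w => Ψ (lam ^ n * w)) = fun w => f^[n] (Ψ w) := funext fun w => key n w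
    rw [heq] at h1
    rw [mul_comm]
    exact h1.unique h2
  -- analyticity facts
  have hΨan : AnalyticOnNhd ℂ Ψ Set.univ := fun z _ => hΨ.analyticAt z
  have hgan : AnalyticOnNhd ℂ (deriv Ψ) Set.univ := hΨan.deriv
  have hfan : AnalyticOnNhd ℂ f Set.univ := fun z _ => hf.analyticAt z
  have hf'an : AnalyticOnNhd ℂ (deriv f) Set.univ := hfan.deriv
  -- derivative of Ψ at 0 is nonzero
  have hg0 : deriv Ψ 0 ≠ 0 := by
    by_contra h0
    have hganal : AnalyticAt ℂ (deriv Ψ) 0 := hgan 0 (mem_univ _)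
    -- deriv Ψ is not eventually zero near 0
    have hne : ¬ (∀ᶠ z in 𝓝 (0 : ℂ), deriv Ψ z = 0) := by
      intro hev
      have hall : ∀ z : ℂ, deriv Ψ z = 0 := fun z => by
        have := hgan.eqOn_of_preconnected_of_eventuallyEq
          (g := fun _ => (0 : ℂ)) (fun z _ => analyticAt_const)
          isPreconnected_univ (mem_univ (0 : ℂ)) (by exact hev) (mem_univ z)
        simpa using this
      have hconst : ∀ z : ℂ, Ψ z = Ψ 0 := fun z => is_const_of_deriv_eq_zero hΨ hall z 0
      obtain ⟨U, hU, hUinj⟩ := hinj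
      have h1 : U ∈ 𝓝[≠] (0:ℂ) := nhdsWithin_le_nhds hU
      obtain ⟨u, hu⟩ := Filter.nonempty_of_mem (Filter.inter_mem h1 self_mem_nhdsWithin)
      exact hu.2 (hUinj hu.1 (mem_of_mem_nhds hU) (by rw [hconst u, hconst 0]))
    have hordtop : analyticOrderAt (deriv Ψ) 0 ≠ ⊤ := by
      intro htop
      exact hne (analyticOrderAt_eq_top.mp htop)
    obtain ⟨n, hn⟩ := WithTop.ne_top_iff_exists.mp hordtop
    obtain ⟨h, hhan, hh0, hhev⟩ := (hganal.analyticOrderAt_eq_natCast (n := n)).mp hn.symm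
    simp only [sub_zero, smul_eq_mul] at hhev
    -- n ≠ 0 since deriv Ψ 0 = 0
    have hn0 : n ≠ 0 := by
      intro hn0
      rw [hn0] at hhev
      have := hhev.self_of_nhds
      simp only [pow_zero, one_mul] at this
      exact hh0 (this ▸ h0)
    -- the key functional identity on derivatives, degree 1
    have hid : ∀ z : ℂ, lam * deriv Ψ (lam * z) = deriv f (Ψ z) * deriv Ψ z := by
      intro z
      have := hchain 1 z
      simpa using this
    -- transfer the local representation through z ↦ lam * z
    have htend : Filter.Tendsto (fun z : ℂ => lam * z) (𝓝 0) (𝓝 0) :=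
      ((continuous_const.mul continuous_id : Continuous fun z : ℂ => lam * z)).tendsto' 0 0
        (mul_zero lam)
    have hhev2 : ∀ᶠ z in 𝓝 (0 : ℂ), deriv Ψ (lam * z) = (lam * z) ^ n * h (lam * z) :=
      htend.eventually hhev
    -- the identity for the factored functions, off 0
    have hF : ∀ᶠ z in 𝓝[≠] (0 : ℂ),
        lam ^ (n + 1) * h (lam * z) = deriv f (Ψ z) * h z := by
      filter_upwards [mem_nhdsWithin_of_mem_nhds hhev, mem_nhdsWithin_of_mem_nhds hhev2,
        self_mem_nhdsWithin] with z h1 h2 h3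
      have hz : z ≠ 0 := h3
      have hzn : (z : ℂ) ^ n ≠ 0 := pow_ne_zero n hz
      have hthis := hid z
      rw [h1, h2, mul_pow] at hthis
      have h4 : z ^ n * (lam ^ (n + 1) * h (lam * z)) = z ^ n * (deriv f (Ψ z) * h z) := by
        linear_combination hthis
      exact mul_left_cancel₀ hzn h4
    -- take the limit z → 0
    have hcont : ContinuousAt (fun z : ℂ =>
        lam ^ (n + 1) * h (lam * z) - deriv f (Ψ z) * h z) 0 := by
      have hc1 : ContinuousAt (fun z : ℂ => h (lam * z)) 0 := by
        have hc0 : ContinuousAt h (lam * 0) := by rw [mul_zero]; exact hhan.continuousAt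
        exact hc0.comp (by fun_prop)
      exact (continuousAt_const.mul hc1).sub
        ((((hf'an (Ψ 0) (mem_univ _)).continuousAt).comp
          (hΨ.continuous.continuousAt)).mul hhan.continuousAt)
    have hlim : lam ^ (n + 1) * h (lam * 0) - deriv f (Ψ 0) * h 0 = 0 := by
      have h1 : Filter.Tendsto (fun z : ℂ =>
          lam ^ (n + 1) * h (lam * z) - deriv f (Ψ z) * h z) (𝓝[≠] (0:ℂ))
          (𝓝 (lam ^ (n + 1) * h (lam * 0) - deriv f (Ψ 0) * h 0)) :=
        hcont.continuousWithinAt.tendsto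
      have h2 : Filter.Tendsto (fun z : ℂ =>
          lam ^ (n + 1) * h (lam * z) - deriv f (Ψ z) * h z) (𝓝[≠] (0:ℂ)) (𝓝 0) := by
        apply Filter.Tendsto.congr' _ tendsto_const_nhds
        filter_upwards [hF] with z hz
        exact (sub_eq_zero.mpr hz).symm
      exact tendsto_nhds_unique h1 h2
    rw [mul_zero, hΨ0, ← hlam, sub_eq_zero] at hlim
    have : lam ^ (n + 1) = lam := by
      exact mul_right_cancel₀ hh0 hlim
    have habs : ‖lam‖ ^ (n + 1) = ‖lam‖ := by
      rw [← norm_pow, this]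
    have h1 : ‖lam‖ < ‖lam‖ ^ (n + 1) := by
      calc ‖lam‖ = ‖lam‖ ^ 1 := (pow_one _).symm
      _ < ‖lam‖ ^ (n + 1) := by
        apply pow_lt_pow_right₀ hrep
        omega
    linarith [habs ▸ h1]
  -- main conclusion
  intro z hz
  rcases eq_or_ne z 0 with rfl | hz0
  · exact hg0
  · have htend : Filter.Tendsto (fun n : ℕ => z * lam⁻¹ ^ n) atTop (𝓝 0) := by
      have h1 : Filter.Tendsto (fun n : ℕ => lam⁻¹ ^ n) atTop (𝓝 0) := by
        apply tendsto_pow_atTop_nhds_zero_of_norm_lt_one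
        rw [norm_inv]
        rw [inv_lt_one_iff₀]
        right
        exact lt_of_lt_of_le hrep (le_refl _)
      have := h1.const_mul z
      simpa using this
    have htend2 : Filter.Tendsto (fun n : ℕ => deriv Ψ (z * lam⁻¹ ^ n)) atTop
        (𝓝 (deriv Ψ 0)) := by
      have hc : ContinuousAt (deriv Ψ) 0 := (hgan 0 (mem_univ _)).continuousAt
      exact hc.tendsto.comp htend
    obtain ⟨n, hn1, hn2⟩ := ((htend2.eventually_ne hg0).and (eventually_ge_atTop 1)).exists
    set w := z * lam⁻¹ ^ n with hw
    have hwz : lam ^ n * w = z := by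
      rw [hw]
      rw [mul_comm z, ← mul_assoc, ← mul_pow, mul_inv_cancel₀ hlam0, one_pow, one_mul]
    have h1 := hchain n w
    rw [hwz] at h1
    have hΨw : f^[n] (Ψ w) = p := by rw [← key n w, hwz, hz]
    have hd := hreg n hn2 (Ψ w) hΨw
    intro hc
    rw [hc, mul_zero] at h1
    exact (mul_ne_zero hd hn1) h1.symm
end

section
/- Let T be holomorphic near 0 with T(0) = Q ∈ ℝ \ {0}, and power series T(z) = Q + a₁z + ... + a_m z^m + a_{m+1} z^{m+1} + O(z^{m+2}) with a₁,…,a_m ∈ ℝ, a₁ ≠ 0, and Im(a_{m+1}) ≠ 0. Let β(x) = x + i b x^K + o(x^K) (b ∈ ℝ \ {0}, K > 1) be a real-analytic curve through 0 tangent to ℝ. If Im T'(β(x)) ≡ 0 for all small x > 0, then m ≥ K. -/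
open Metric Filter

open Asymptotics Set

/-- `z^i = O(z^j)` near `0` for `j ≤ i`. -/
lemma pow_isBigO_pow_nhds_zero {i j : ℕ} (h : j ≤ i) :
    (fun z : ℂ => z ^ i) =O[nhds 0] fun z => z ^ j := by
  rw [isBigO_iff]
  refine ⟨1, ?_⟩
  have hev : ∀ᶠ z : ℂ in nhds 0, ‖z‖ ≤ 1 := by
    have : Metric.closedBall (0:ℂ) 1 ∈ nhds (0:ℂ) := Metric.closedBall_mem_nhds _ one_pos
    filter_upwards [this] with z hz using by simpa using hz
  filter_upwards [hev] with z hz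
  simp only [norm_pow, one_mul]
  exact pow_le_pow_of_le_one (norm_nonneg z) hz h

lemma AnalyticAt.deriv' {f : ℂ → ℂ} {z : ℂ} (hf : AnalyticAt ℂ f z) :
    AnalyticAt ℂ (deriv f) z := by
  have : AnalyticOnNhd ℂ f {w | AnalyticAt ℂ f w} := fun w hw => hw
  exact this.deriv z hf

lemma AnalyticAt.dslope' {f : ℂ → ℂ} (hf : AnalyticAt ℂ f 0) :
    AnalyticAt ℂ (dslope f 0) 0 := by
  obtain ⟨p, hp⟩ := hf
  exact ⟨p.fslope, hp.has_fpower_series_dslope_fslope⟩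

/-- If `f` is analytic at `0` and `f = O(z^{n+1})`, then `deriv f = O(z^n)` near `0`. -/
lemma deriv_isBigO_of_isBigO : ∀ (n : ℕ) (f : ℂ → ℂ), AnalyticAt ℂ f 0 →
    (f =O[nhds (0:ℂ)] fun z => z ^ (n+1)) →
    deriv f =O[nhds (0:ℂ)] fun z => z ^ n := by
  intro n
  induction n with
  | zero =>
    intro f hf _
    simpa using hf.deriv'.continuousAt.tendsto.isBigO_one ℝ
  | succ n ih =>
    intro f hf h
    set g := dslope f 0 with hgdef
    have hga : AnalyticAt ℂ g 0 := hf.dslope'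
    have h0 : f 0 = 0 := by
      obtain ⟨C, hC⟩ := h.isBigOWith
      have h1 := hC.bound.self_of_nhds
      simp only [norm_zero, zero_pow (by omega : n + 1 + 1 ≠ 0), mul_zero] at h1
      exact norm_le_zero_iff.mp h1
    have hfg : ∀ z, f z = z * g z := by
      intro z
      have h1 := sub_smul_dslope f 0 z
      simp only [sub_zero, smul_eq_mul, h0, ← hgdef] at h1
      exact h1.symm
    obtain ⟨C, hC⟩ := h.isBigOWith
    have hbound : ∀ᶠ z : ℂ in nhds 0, z ≠ 0 → ‖g z‖ ≤ C * ‖z‖ ^ (n + 1) := by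
      filter_upwards [hC.bound] with z hz hz0
      have hz1 : ‖f z‖ = ‖z‖ * ‖g z‖ := by rw [hfg z, norm_mul]
      rw [hz1, norm_pow] at hz
      have hzpos : 0 < ‖z‖ := norm_pos_iff.mpr hz0
      have : ‖z‖ * ‖g z‖ ≤ ‖z‖ * (C * ‖z‖ ^ (n + 1)) := by
        calc ‖z‖ * ‖g z‖ ≤ C * ‖z‖ ^ (n + 1 + 1) := hz
        _ = ‖z‖ * (C * ‖z‖ ^ (n + 1)) := by ring
      exact le_of_mul_le_mul_left this hzpos
    have hg0 : g 0 = 0 := by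
      have htend : Tendsto g (nhdsWithin 0 {(0:ℂ)}ᶜ) (nhds 0) := by
        have hb : ∀ᶠ z : ℂ in nhdsWithin 0 {(0:ℂ)}ᶜ, ‖g z‖ ≤ C * ‖z‖ ^ (n+1) := by
          filter_upwards [eventually_nhdsWithin_of_eventually_nhds hbound,
            self_mem_nhdsWithin] with z hz hz0
          exact hz hz0
        have h3 : Tendsto (fun z : ℂ => C * ‖z‖ ^ (n+1)) (nhds 0)
            (nhds (C * ‖(0:ℂ)‖ ^ (n+1))) :=
          tendsto_const_nhds.mul ((continuous_norm.tendsto _).pow _)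
        have h4 : Tendsto (fun z : ℂ => C * ‖z‖ ^ (n+1)) (nhdsWithin 0 {(0:ℂ)}ᶜ) (nhds 0) := by
          simpa using h3.mono_left nhdsWithin_le_nhds
        exact squeeze_zero_norm' hb h4
      exact tendsto_nhds_unique (hga.continuousAt.tendsto.mono_left nhdsWithin_le_nhds) htend
    have hgO : g =O[nhds (0:ℂ)] fun z => z ^ (n+1) := by
      rw [isBigO_iff]
      refine ⟨C, ?_⟩
      filter_upwards [hbound] with z hz
      rcases eq_or_ne z 0 with rfl | hz0
      · simp [hg0]
      · simpa [norm_pow] using hz hz0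
    have hdg := ih g hga hgO
    have hfeq : f = fun z => z * g z := funext hfg
    have hder : ∀ᶠ z : ℂ in nhds 0, deriv f z = g z + z * deriv g z := by
      filter_upwards [hga.eventually_analyticAt] with z hz
      have hd : HasDerivAt (fun w => w * g w) (1 * g z + z * deriv g z) z :=
        (hasDerivAt_id z).mul hz.differentiableAt.hasDerivAt
      rw [hfeq]
      rw [hd.deriv]
      ring
    have hsum : (fun z : ℂ => g z + z * deriv g z) =O[nhds 0] fun z => z ^ (n+1) := by
      refine IsBigO.add hgO ?_
      have h1 : (fun z : ℂ => z * deriv g z) =O[nhds 0] fun z => z * z ^ n :=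
        (isBigO_refl (fun z : ℂ => z) _).mul hdg
      have h2 : (fun z : ℂ => z * z ^ n) = fun z : ℂ => z ^ (n+1) := by
        funext z; ring
      rwa [h2] at h1
    exact hsum.congr' (Filter.EventuallyEq.symm hder) Filter.EventuallyEq.rfl

/-- `x^t = o(x^s)` as `x → 0⁺` for `s < t` (real powers). -/
lemma rpow_isLittleO_rpow {s t : ℝ} (h : s < t) :
    (fun x : ℝ => x ^ t) =o[nhdsWithin 0 (Set.Ioi 0)] fun x => x ^ s := by
  have hts : 0 < t - s := by linarith
  have h1 : (fun x : ℝ => x ^ (t - s)) =o[nhdsWithin 0 (Set.Ioi 0)] (fun _ => (1:ℝ)) := by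
    rw [isLittleO_one_iff]
    have hc := (Real.continuousAt_rpow_const 0 (t - s) (Or.inr hts.le)).tendsto
    rw [Real.zero_rpow hts.ne'] at hc
    exact hc.mono_left nhdsWithin_le_nhds
  have h2 := (isBigO_refl (fun x : ℝ => x ^ s) (nhdsWithin 0 (Set.Ioi 0))).mul_isLittleO h1
  refine h2.congr' ?_ (by simp)
  filter_upwards [self_mem_nhdsWithin] with x (hx : (0:ℝ) < x)
  rw [← Real.rpow_add hx]
  ring_nf

/-- Leading-order comparison: if `Im T'(β(x)) ≡ 0` along a curve
`β(x) = x + i b x^K + o(x^K)` tangent to `ℝ`, with the stated power series of `T`,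
then `m ≥ K`. -/
theorem tangency_order_bound
    (T : ℂ → ℂ) (r : ℝ) (hr : 0 < r)
    (hT : DifferentiableOn ℂ T (ball (0 : ℂ) r))
    (Q : ℝ) (hQ : Q ≠ 0) (hT0 : T 0 = (Q : ℂ))
    (m : ℕ) (hm : 1 ≤ m) (a : ℕ → ℂ)
    (ha_real : ∀ j, 1 ≤ j → j ≤ m → (a j).im = 0)
    (ha1 : a 1 ≠ 0) (ham1 : (a (m + 1)).im ≠ 0)
    (hseries : (fun z : ℂ => T z - ((Q : ℂ) + ∑ j ∈ Finset.Icc 1 (m + 1), a j * z ^ j))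
        =O[nhds 0] fun z : ℂ => z ^ (m + 2))
    (b K : ℝ) (hb : b ≠ 0) (hK : 1 < K)
    (β e : ℝ → ℂ)
    (hβ : ∀ x : ℝ, β x = (x : ℂ) + Complex.I * (b : ℂ) * ((x ^ K : ℝ) : ℂ) + e x)
    (he : e =o[nhdsWithin 0 (Set.Ioi 0)] fun x : ℝ => ((x ^ K : ℝ) : ℂ))
    (ε : ℝ) (hε : 0 < ε)
    (hmem : ∀ x ∈ Set.Ioo (0 : ℝ) ε, β x ∈ ball (0 : ℂ) r)
    (him : ∀ x ∈ Set.Ioo (0 : ℝ) ε, (deriv T (β x)).im = 0) :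
    K ≤ (m : ℝ) := by
  by_contra hcon
  push_neg at hcon
  set l := nhdsWithin (0:ℝ) (Set.Ioi 0) with hldef
  -- basic eventualities
  have hxpos : ∀ᶠ x : ℝ in l, 0 < x := by
    filter_upwards [self_mem_nhdsWithin] with x hx using hx
  have hIoo : ∀ᶠ x : ℝ in l, x ∈ Set.Ioo 0 ε := by
    rw [hldef]
    exact Filter.eventually_iff_exists_mem.mpr
      ⟨Set.Ioo 0 ε, Ioo_mem_nhdsGT_of_mem ⟨le_refl 0, hε⟩, fun x hx => hx⟩
  -- the polynomial part and remainder
  set f : ℂ → ℂ := fun z => T z - ((Q : ℂ) + ∑ j ∈ Finset.Icc 1 (m + 1), a j * z ^ j)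
    with hfdef
  have hPdiff : ∀ z : ℂ, HasDerivAt
      (fun w : ℂ => (Q : ℂ) + ∑ j ∈ Finset.Icc 1 (m + 1), a j * w ^ j)
      (∑ j ∈ Finset.Icc 1 (m + 1), a j * ((j : ℂ) * z ^ (j - 1))) z := by
    intro z
    have h1 : HasDerivAt (fun w : ℂ => (Q : ℂ) + ∑ j ∈ Finset.Icc 1 (m + 1), a j * w ^ j)
        (0 + ∑ j ∈ Finset.Icc 1 (m + 1), a j * ((j : ℂ) * z ^ (j - 1))) z := by
      refine (hasDerivAt_const z _).add (HasDerivAt.fun_sum fun j hj => ?_)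
      exact (hasDerivAt_pow j z).const_mul (a j)
    simpa using h1
  have hTan : AnalyticAt ℂ T 0 := hT.analyticAt (isOpen_ball.mem_nhds (mem_ball_self hr))
  have hPan : AnalyticAt ℂ (fun w : ℂ => (Q : ℂ) + ∑ j ∈ Finset.Icc 1 (m + 1), a j * w ^ j) 0 := by
    have hd : Differentiable ℂ (fun w : ℂ => (Q : ℂ) + ∑ j ∈ Finset.Icc 1 (m + 1), a j * w ^ j) :=
      fun z => (hPdiff z).differentiableAt
    exact hd.analyticAt 0
  have hfan : AnalyticAt ℂ f 0 := by
    rw [hfdef]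
    exact hTan.sub hPan
  have hR : deriv f =O[nhds (0:ℂ)] fun z => z ^ (m + 1) :=
    deriv_isBigO_of_isBigO (m + 1) f hfan hseries
  -- curve asymptotics
  set w : ℝ → ℂ := fun x => Complex.I * (b : ℂ) * ((x ^ K : ℝ) : ℂ) + e x with hwdef
  have hβw : ∀ x : ℝ, β x = (x : ℂ) + w x := by
    intro x; rw [hβ x, hwdef]; ring
  have hcast : (fun x : ℝ => ((x ^ K : ℝ) : ℂ)) =O[l] fun x : ℝ => x ^ K := by
    rw [isBigO_iff]
    exact ⟨1, Eventually.of_forall fun x => by simp [Real.norm_eq_abs]⟩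
  have hwO : w =O[l] fun x : ℝ => x ^ K := by
    rw [hwdef]
    refine IsBigO.add ?_ (he.isBigO.trans hcast)
    exact hcast.const_mul_left (Complex.I * (b:ℂ))
  have hrpow0 : ∀ {p : ℝ}, 0 < p → Tendsto (fun x : ℝ => x ^ p) l (nhds 0) := by
    intro p hp
    have hc := (Real.continuousAt_rpow_const 0 p (Or.inr hp.le)).tendsto
    rw [Real.zero_rpow hp.ne'] at hc
    exact hc.mono_left nhdsWithin_le_nhds
  have hw0 : Tendsto w l (nhds 0) := hwO.trans_tendsto (hrpow0 (by linarith))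
  have hid : Tendsto (fun x : ℝ => (x : ℂ)) l (nhds 0) := by
    have h1 := Complex.continuous_ofReal.tendsto 0
    simpa using h1.mono_left nhdsWithin_le_nhds
  have hβ0 : Tendsto β l (nhds 0) := by
    have h1 := hid.add hw0
    simp only [add_zero] at h1
    exact h1.congr fun x => (hβw x).symm
  have hxC : (fun x : ℝ => (x : ℂ)) =O[l] fun x : ℝ => x := by
    rw [isBigO_iff]
    exact ⟨1, Eventually.of_forall fun x => by simp [Real.norm_eq_abs]⟩
  have hwOx : w =O[l] fun x : ℝ => x := by
    refine hwO.trans ?_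
    have h1 := (rpow_isLittleO_rpow hK).isBigO
    simpa [Real.rpow_one] using h1
  have hβOx : β =O[l] fun x : ℝ => x := by
    refine (hxC.add hwOx).congr' (Eventually.of_forall fun x => (hβw x).symm)
      EventuallyEq.rfl
  have hβO1 : β =O[l] (fun _ : ℝ => (1:ℝ)) := hβ0.isBigO_one ℝ
  have hxK_m : (fun x : ℝ => x ^ K) =o[l] fun x : ℝ => x ^ m := by
    have h1 := rpow_isLittleO_rpow hcon
    simpa [Real.rpow_natCast] using h1
  -- power differences along the curve
  have hA : ∀ n : ℕ, n ≤ m →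
      ((fun x : ℝ => (β x) ^ n - ((x : ℂ)) ^ n) =o[l] fun x : ℝ => x ^ m) := by
    intro n
    induction n with
    | zero =>
      intro _
      simp only [pow_zero, sub_self]
      exact isLittleO_zero _ _
    | succ n ihn =>
      intro hnm
      have ih := ihn (Nat.le_of_succ_le hnm)
      have h1 : (fun x : ℝ => (β x) ^ n) =O[l] (fun _ : ℝ => (1:ℝ)) := by
        simpa using hβO1.pow n
      have h2 : (fun x : ℝ => β x - (x : ℂ)) =O[l] fun x : ℝ => x ^ K := by
        refine hwO.congr' (Eventually.of_forall fun x => ?_) EventuallyEq.rfl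
        show w x = β x - (x : ℂ)
        rw [hβw x]; ring
      have h3 : (fun x : ℝ => (β x) ^ n * (β x - (x : ℂ))) =o[l] fun x : ℝ => x ^ m := by
        have h4 := h1.mul h2
        simp only [one_mul] at h4
        exact h4.trans_isLittleO hxK_m
      have hx1C : (fun x : ℝ => (x : ℂ)) =O[l] (fun _ : ℝ => (1:ℝ)) := by
        simpa using hid.isBigO_one ℝ
      have h5 : (fun x : ℝ => ((β x) ^ n - (x : ℂ) ^ n) * (x : ℂ)) =o[l]
          fun x : ℝ => x ^ m := by
        have h6 := ih.mul_isBigO hx1C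
        simpa using h6
      have hsum := h3.add h5
      refine hsum.congr' (Eventually.of_forall fun x => ?_) EventuallyEq.rfl
      ring
  -- remainder along the curve
  have hB : (fun x : ℝ => deriv f (β x)) =o[l] fun x : ℝ => x ^ m := by
    have h1 : (fun x : ℝ => deriv f (β x)) =O[l] fun x : ℝ => (β x) ^ (m + 1) :=
      hR.comp_tendsto hβ0
    have h2 : (fun x : ℝ => (β x) ^ (m + 1)) =O[l] fun x : ℝ => x ^ (m + 1) :=
      hβOx.pow (m + 1)
    have h3 : (fun x : ℝ => x ^ (m + 1)) =o[l] fun x : ℝ => x ^ m := by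
      have h4 := rpow_isLittleO_rpow
        (show (m : ℝ) < ((m + 1 : ℕ) : ℝ) from by exact_mod_cast Nat.lt_succ_self m)
      simpa only [Real.rpow_natCast] using h4
    exact h1.trans_isLittleO (h2.trans_isLittleO h3)
  -- identity along the curve
  have hev : ∀ᶠ x in l, deriv T (β x) =
      (∑ j ∈ Finset.Icc 1 (m + 1), a j * ((j : ℂ) * (β x) ^ (j - 1))) + deriv f (β x) := by
    filter_upwards [hIoo] with x hx
    have hTd : DifferentiableAt ℂ T (β x) :=
      hT.differentiableAt (isOpen_ball.mem_nhds (hmem x hx))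
    have hPd : DifferentiableAt ℂ
        (fun w : ℂ => (Q : ℂ) + ∑ j ∈ Finset.Icc 1 (m + 1), a j * w ^ j) (β x) :=
      (hPdiff (β x)).differentiableAt
    have hsub : deriv f (β x) = deriv T (β x) -
        ∑ j ∈ Finset.Icc 1 (m + 1), a j * ((j : ℂ) * (β x) ^ (j - 1)) := by
      rw [hfdef, deriv_fun_sub hTd hPd, (hPdiff (β x)).deriv]
    rw [hsub]; ring
  -- the leading coefficient
  set c : ℝ := ((m : ℝ) + 1) * (a (m + 1)).im with hcdef
  have hc : c ≠ 0 := mul_ne_zero (by positivity) ham1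
  have hsum_im : ∀ x : ℝ,
      (∑ j ∈ Finset.Icc 1 (m + 1), a j * ((j : ℂ) * ((x : ℂ)) ^ (j - 1))).im = c * x ^ m := by
    intro x
    rw [Complex.im_sum]
    have hterm : ∀ j ∈ Finset.Icc 1 (m + 1),
        (a j * ((j : ℂ) * ((x : ℂ)) ^ (j - 1))).im = (a j).im * ((j : ℝ) * x ^ (j - 1)) := by
      intro j hj
      have h1 : ((j : ℂ) * ((x : ℂ)) ^ (j - 1)) = (((j : ℝ) * x ^ (j - 1) : ℝ) : ℂ) := by
        push_cast; ring
      rw [h1]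
      simp only [Complex.mul_im, Complex.ofReal_re, Complex.ofReal_im, mul_zero, zero_mul]
      ring
    rw [Finset.sum_congr rfl hterm]
    rw [Finset.sum_eq_single_of_mem (m + 1) (Finset.mem_Icc.mpr ⟨by omega, le_refl _⟩)]
    · rw [hcdef]
      have : m + 1 - 1 = m := by omega
      rw [this]
      push_cast
      ring
    · intro j hj hne
      have hj' := Finset.mem_Icc.mp hj
      rw [ha_real j hj'.1 (by omega)]
      ring
  -- the difference is little-o
  have hD : (fun x : ℝ => deriv T (β x) -
      ∑ j ∈ Finset.Icc 1 (m + 1), a j * ((j : ℂ) * ((x : ℂ)) ^ (j - 1))) =o[l]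
      fun x : ℝ => x ^ m := by
    have hterms : ∀ j ∈ Finset.Icc 1 (m + 1),
        (fun x : ℝ => a j * (j : ℂ) * ((β x) ^ (j - 1) - ((x : ℂ)) ^ (j - 1))) =o[l]
        fun x : ℝ => x ^ m := by
      intro j hj
      have hj' := Finset.mem_Icc.mp hj
      exact (hA (j - 1) (by omega)).const_mul_left (a j * (j : ℂ))
    have hsumo := IsLittleO.fun_sum hterms
    have hsplit : (fun x : ℝ => deriv T (β x) -
        (∑ j ∈ Finset.Icc 1 (m + 1), a j * ((j : ℂ) * ((x : ℂ)) ^ (j - 1)))) =ᶠ[l]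
        (fun x : ℝ => (∑ j ∈ Finset.Icc 1 (m + 1),
            a j * (j : ℂ) * ((β x) ^ (j - 1) - ((x : ℂ)) ^ (j - 1)))
          + deriv f (β x)) := by
      filter_upwards [hev] with x hx
      rw [hx]
      have h1 : ∑ j ∈ Finset.Icc 1 (m + 1), a j * (j : ℂ) * ((β x) ^ (j - 1) - ((x : ℂ)) ^ (j - 1))
          = (∑ j ∈ Finset.Icc 1 (m + 1), a j * ((j : ℂ) * (β x) ^ (j - 1)))
            - ∑ j ∈ Finset.Icc 1 (m + 1), a j * ((j : ℂ) * ((x : ℂ)) ^ (j - 1)) := by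
        rw [← Finset.sum_sub_distrib]
        exact Finset.sum_congr rfl fun j _ => by ring
      rw [h1]; ring
    exact (hsumo.add hB).congr' hsplit.symm EventuallyEq.rfl
  have hDim : (fun x : ℝ => (deriv T (β x) -
      ∑ j ∈ Finset.Icc 1 (m + 1), a j * ((j : ℂ) * ((x : ℂ)) ^ (j - 1))).im) =o[l]
      fun x : ℝ => x ^ m :=
    (Complex.imCLM.isBigO_comp _ l).trans_isLittleO hD
  have hEq : (fun x : ℝ => -((deriv T (β x) -
      ∑ j ∈ Finset.Icc 1 (m + 1), a j * ((j : ℂ) * ((x : ℂ)) ^ (j - 1))).im)) =ᶠ[l]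
      fun x : ℝ => c * x ^ m := by
    filter_upwards [hIoo] with x hx
    rw [Complex.sub_im, him x hx, hsum_im x]
    ring
  have hfinal : (fun x : ℝ => c * x ^ m) =o[l] fun x : ℝ => x ^ m :=
    hDim.neg_left.congr' hEq EventuallyEq.rfl
  have hhalf : (0:ℝ) < |c| / 2 := by positivity
  obtain ⟨x, hb1, hb2⟩ := ((isLittleO_iff.mp hfinal hhalf).and hxpos).exists
  have hxm : (0:ℝ) < x ^ m := pow_pos hb2 m
  rw [Real.norm_eq_abs, Real.norm_eq_abs, abs_mul, abs_of_pos hxm] at hb1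
  have h9 : |c| ≤ |c| / 2 := le_of_mul_le_mul_right hb1 hxm
  have h10 : (0:ℝ) < |c| := abs_pos.mpr hc
  linarith
end

section
/- Let T be an entire function such that T'(z) ∈ ℝ for all z lying on infinitely many distinct straight lines through the origin. Then T' is constant (in fact T' takes a single real value), hence T is affine. -/
-- real on ℝ implies deriv real on ℝ
lemma deriv_im_zero_of_im_zero {g : ℂ → ℂ} (hg : Differentiable ℂ g)
    (h : ∀ t : ℝ, (g t).im = 0) : ∀ t : ℝ, (deriv g t).im = 0 := by
  intro t
  have H : HasDerivAt g (deriv g t) (t : ℂ) := (hg (t : ℂ)).hasDerivAt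
  have H1 : HasDerivAt (fun y : ℝ => g y) (deriv g t) t := H.comp_ofReal
  have H2 : HasDerivAt (fun y : ℝ => (g y).im) ((deriv g t).im) t :=
    Complex.imCLM.hasFDerivAt.comp_hasDerivAt t H1
  have H3 : (fun y : ℝ => (g y).im) = fun _ => (0 : ℝ) := funext h
  rw [H3] at H2
  exact H2.unique (hasDerivAt_const _ _)

lemma iteratedDeriv_im_zero {g : ℂ → ℂ} (hg : Differentiable ℂ g)
    (h : ∀ t : ℝ, (g t).im = 0) (k : ℕ) : ∀ t : ℝ, (iteratedDeriv k g t).im = 0 := by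
  induction k generalizing g with
  | zero => simpa using h
  | succ k ih =>
    intro t
    rw [iteratedDeriv_succ']
    have hg' : Differentiable ℂ (deriv g) :=
      ((contDiff_infty_iff_deriv.mp (hg.contDiff)).2).differentiable (by simp)
    exact ih hg' (deriv_im_zero_of_im_zero hg h) t

/-- If `T'` is real on infinitely many distinct lines through the origin, then
`T'` is a real constant and `T` is affine. -/
theorem real_derivative_on_many_lines
    (T : ℂ → ℂ) (hT : Differentiable ℂ T)
    (d : ℕ → ℂ) (hd : ∀ n, d n ≠ 0)
    (hdist : ∀ m n, m ≠ n → ∀ c : ℝ, d m ≠ (c : ℂ) * d n)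
    (hreal : ∀ n, ∀ t : ℝ, (deriv T ((t : ℂ) * d n)).im = 0) :
    (∃ a : ℝ, ∀ z : ℂ, deriv T z = (a : ℂ)) ∧
    ∃ a : ℝ, ∃ b : ℂ, ∀ z : ℂ, T z = (a : ℂ) * z + b := by
  set f : ℂ → ℂ := deriv T with hfdef
  have hf : Differentiable ℂ f :=
    ((contDiff_infty_iff_deriv.mp (hT.contDiff)).2).differentiable (by simp)
  -- coefficients
  have key : ∀ k : ℕ, ∀ n : ℕ, ((d n) ^ k * iteratedDeriv k f 0).im = 0 := by
    intro k n
    have hgn : Differentiable ℂ (fun z => f (d n * z)) :=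
      hf.comp ((differentiable_id).const_mul (d n))
    have him : ∀ t : ℝ, ((fun z => f (d n * z)) t).im = 0 := by
      intro t
      simpa [mul_comm] using hreal n t
    have h1 := iteratedDeriv_im_zero hgn him k 0
    rw [iteratedDeriv_comp_const_mul (hf.contDiff) (d n)] at h1
    simpa using h1
  -- higher coefficients vanish
  have hzero : ∀ k : ℕ, 1 ≤ k → iteratedDeriv k f 0 = 0 := by
    intro k hk
    by_contra hA
    set A := iteratedDeriv k f 0 with hAdef
    -- real values
    have hrealval : ∀ n, (d n) ^ k * A = ((((d n) ^ k * A).re : ℝ) : ℂ) := by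
      intro n
      have := key k n
      exact Complex.ext (by simp) (by simp only [Complex.ofReal_im]; exact this)
    have hne : ∀ n, (((d n) ^ k * A).re : ℝ) ≠ 0 := by
      intro n h0
      have := hrealval n
      rw [h0] at this
      simp only [Complex.ofReal_zero, mul_eq_zero] at this
      rcases this with h | h
      · exact pow_ne_zero k (hd n) h
      · exact hA h
    -- quotients
    set q : ℕ → ℂ := fun n => d n / d 0 with hq
    have hqne : ∀ n, q n ≠ 0 := fun n => div_ne_zero (hd n) (hd 0)
    have hqr : ∀ n, (q n) ^ k = (((((d n)^k * A).re / ((d 0)^k * A).re : ℝ)) : ℂ) := by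
      intro n
      have e1 : (q n) ^ k = ((d n)^k * A) / ((d 0)^k * A) := by
        show (d n / d 0) ^ k = _
        rw [div_pow, ← mul_div_mul_right ((d n)^k) ((d 0)^k) hA]
      rw [e1, Complex.ofReal_div, ← hrealval n, ← hrealval 0]
    -- unit directions
    set u : ℕ → ℂ := fun n => q n / (‖q n‖ : ℂ) with hu
    have hroot : ∀ n, (u n) ^ (2 * k) = 1 := by
      intro n
      set s : ℝ := ((d n)^k * A).re / ((d 0)^k * A).re with hs
      have hsne : s ≠ 0 := div_ne_zero (hne n) (hne 0)
      have h2 : (q n) ^ (2 * k) = ((s^2 : ℝ) : ℂ) := by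
        have : (q n) ^ (2 * k) = ((q n) ^ k) ^ 2 := by
          rw [← pow_mul, mul_comm]
        rw [this, hqr n]
        norm_cast
      have h3 : ((‖q n‖) : ℂ) ^ (2 * k) = ((s^2 : ℝ) : ℂ) := by
        have habs2 : ‖(q n) ^ (2 * k)‖ = s ^ 2 := by
          rw [h2, Complex.norm_real, Real.norm_eq_abs]
          exact abs_of_nonneg (sq_nonneg s)
        calc ((‖q n‖) : ℂ) ^ (2 * k)
            = ((‖q n‖ ^ (2 * k) : ℝ) : ℂ) := by push_cast; ring
          _ = ((‖(q n) ^ (2 * k)‖ : ℝ) : ℂ) := by rw [norm_pow]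
          _ = ((s^2 : ℝ) : ℂ) := by rw [habs2]
      show (q n / ((‖q n‖) : ℂ)) ^ (2 * k) = 1
      rw [div_pow, h2, h3, div_self]
      exact_mod_cast pow_ne_zero 2 hsne
    -- injectivity of u
    have huinj : Function.Injective u := by
      intro m n hmn
      by_contra hne'
      have h1 : q m / (‖q m‖ : ℂ) = q n / (‖q n‖ : ℂ) := hmn
      have ha : ((‖q m‖) : ℂ) ≠ 0 := by
        exact_mod_cast norm_ne_zero_iff.mpr (hqne m)
      have hb : ((‖q n‖) : ℂ) ≠ 0 := by
        exact_mod_cast norm_ne_zero_iff.mpr (hqne n)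
      have h2' : q m * (‖q n‖ : ℂ) = q n * (‖q m‖ : ℂ) :=
        (div_eq_div_iff ha hb).mp h1
      have h4 : q m = ((‖q m‖ / ‖q n‖ : ℝ) : ℂ) * q n := by
        push_cast
        rw [div_mul_eq_mul_div, eq_div_iff hb]
        linear_combination h2'
      have hqm : d m = q m * d 0 := (div_mul_cancel₀ _ (hd 0)).symm
      have hqn2 : q n * d 0 = d n := div_mul_cancel₀ _ (hd 0)
      refine hdist m n hne' (‖q m‖ / ‖q n‖) ?_
      conv_lhs => rw [hqm, h4]
      rw [mul_assoc, hqn2]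
    -- finiteness of roots of unity
    have hfin : Set.Finite {z : ℂ | z ^ (2 * k) = 1} := by
      have h2k : 2 * k ≠ 0 := by omega
      apply Set.Finite.subset (Polynomial.nthRoots (2 * k) (1 : ℂ)).toFinset.finite_toSet
      intro z hz
      rw [Finset.mem_coe, Multiset.mem_toFinset,
        Polynomial.mem_nthRoots (Nat.pos_of_ne_zero h2k)]
      exact hz
    exact Set.infinite_range_of_injective huinj
      (hfin.subset (by rintro _ ⟨n, rfl⟩; exact hroot n))
  -- f is constant
  have hf0im : (f 0).im = 0 := by simpa using hreal 0 0
  have hconst : ∀ z : ℂ, f z = f 0 := by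
    intro z
    have := Complex.taylorSeries_eq_of_entire' (c := 0) (z := z) hf
    rw [← this]
    rw [tsum_eq_single 0]
    · simp
    · intro k hk
      rw [hzero k (Nat.one_le_iff_ne_zero.mpr hk)]
      simp
  refine ⟨⟨(f 0).re, fun z => by rw [hconst z]; exact Complex.ext (by simp) (by simp [hf0im])⟩, ?_⟩
  refine ⟨(f 0).re, T 0, fun z => ?_⟩
  have hg : Differentiable ℂ (fun z => T z - (((f 0).re : ℝ) : ℂ) * z) :=
    hT.sub ((differentiable_id).const_mul _)
  have hderiv0 : ∀ x : ℂ, deriv (fun z => T z - (((f 0).re : ℝ) : ℂ) * z) x = 0 := by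
    intro x
    rw [deriv_fun_sub (hT x) ((differentiableAt_fun_id.const_mul _))]
    rw [deriv_const_mul _ differentiableAt_fun_id]
    simp only [deriv_id'', mul_one]
    rw [← hfdef, hconst x]
    exact sub_eq_zero.mpr (Complex.ext (by simp) (by simp [hf0im]))
  have := is_const_of_deriv_eq_zero hg hderiv0 z 0
  simp only [Complex.ofReal_zero, mul_zero, sub_zero] at this
  linear_combination this
end
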